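/- A trigonal number c ≥ 6 can be written as c = 2a + b with trigonal numbers a, b < c if and only if 4c + 3 is not prime. -/

import Mathlib

set_option maxHeartbeats 1000000


def IsTrigonal (c : ℕ) : Prop := ∃ n : ℕ, c = n * (n + 1)

/-- Thue's lemma for the form x² + 2y². -/
private lemma thue (q : ℕ) (hq : q.Prime) (t : ℤ) (ht : (q : ℤ) ∣ t ^ 2 + 2) :
    ∃ x y : ℤ, (q : ℤ) = x ^ 2 + 2 * y ^ 2 := by
  haveI : Fact q.Prime := ⟨hq⟩
  haveI : NeZero q := ⟨hq.pos.ne'⟩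
  have hrq : Nat.sqrt q * Nat.sqrt q < q := by
    rcases Nat.lt_or_ge (Nat.sqrt q * Nat.sqrt q) q with h | h
    · exact h
    · exfalso
      have h1 : Nat.sqrt q * Nat.sqrt q ≤ q := Nat.sqrt_le q
      have h2 : Nat.sqrt q * Nat.sqrt q = q := le_antisymm h1 h
      have hone := hq.one_lt
      rcases (Nat.Prime.eq_one_or_self_of_dvd hq _ ⟨_, h2.symm⟩) with h3 | h3 <;>
        rw [h3] at h2 <;> nlinarith
  have hcard : (Finset.univ : Finset (ZMod q)).card <
      ((Finset.range (Nat.sqrt q + 1)) ×ˢ (Finset.range (Nat.sqrt q + 1))).card := by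
    rw [Finset.card_product, Finset.card_range, Finset.card_univ, ZMod.card]
    exact Nat.lt_succ_sqrt q
  obtain ⟨p₁, hp₁, p₂, hp₂, hne, hfe⟩ :=
    Finset.exists_ne_map_eq_of_card_lt_of_maps_to hcard
      (f := fun p : ℕ × ℕ => (p.1 : ZMod q) + (t : ZMod q) * (p.2 : ZMod q))
      (fun x _ => Finset.mem_univ _)
  obtain ⟨i₁, j₁⟩ := p₁
  obtain ⟨i₂, j₂⟩ := p₂
  simp only [Finset.mem_product, Finset.mem_range] at hp₁ hp₂
  simp only at hfe
  have hzero : ((((i₁ : ℤ) - i₂) - t * ((j₂ : ℤ) - j₁) : ℤ) : ZMod q) = 0 := by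
    push_cast
    linear_combination hfe
  have hdvd1 : (q : ℤ) ∣ ((i₁ : ℤ) - i₂) - t * ((j₂ : ℤ) - j₁) :=
    (ZMod.intCast_zmod_eq_zero_iff_dvd _ q).mp hzero
  obtain ⟨d, hd⟩ := hdvd1
  obtain ⟨e, he⟩ := ht
  clear hzero hfe hcard
  obtain ⟨X, hXdef⟩ : ∃ X : ℤ, X = (i₁ : ℤ) - i₂ := ⟨_, rfl⟩
  obtain ⟨Y, hYdef⟩ : ∃ Y : ℤ, Y = (j₂ : ℤ) - j₁ := ⟨_, rfl⟩
  rw [← hXdef, ← hYdef] at hd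
  obtain ⟨k, hkdef⟩ : ∃ k : ℤ, k = d * (X + t * Y) + e * Y ^ 2 := ⟨_, rfl⟩
  have hdvd : X ^ 2 + 2 * Y ^ 2 = (q : ℤ) * k := by
    rw [hkdef]
    linear_combination (X + t * Y) * hd + Y ^ 2 * he
  have hr' : ((Nat.sqrt q : ℤ) * Nat.sqrt q) < (q : ℤ) := by exact_mod_cast hrq
  have hXb : X ^ 2 ≤ (Nat.sqrt q : ℤ) * Nat.sqrt q := by
    have h1 : (i₁ : ℤ) ≤ Nat.sqrt q := by exact_mod_cast Nat.lt_succ_iff.mp hp₁.1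
    have h2 : (i₂ : ℤ) ≤ Nat.sqrt q := by exact_mod_cast Nat.lt_succ_iff.mp hp₂.1
    have h3 : (0 : ℤ) ≤ i₁ := Int.natCast_nonneg _
    have h4 : (0 : ℤ) ≤ i₂ := Int.natCast_nonneg _
    nlinarith [hXdef]
  have hYb : Y ^ 2 ≤ (Nat.sqrt q : ℤ) * Nat.sqrt q := by
    have h1 : (j₁ : ℤ) ≤ Nat.sqrt q := by exact_mod_cast Nat.lt_succ_iff.mp hp₁.2
    have h2 : (j₂ : ℤ) ≤ Nat.sqrt q := by exact_mod_cast Nat.lt_succ_iff.mp hp₂.2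
    have h3 : (0 : ℤ) ≤ j₁ := Int.natCast_nonneg _
    have h4 : (0 : ℤ) ≤ j₂ := Int.natCast_nonneg _
    nlinarith [hYdef]
  have hpos : 0 < X ^ 2 + 2 * Y ^ 2 := by
    have hne' : X ≠ 0 ∨ Y ≠ 0 := by
      by_contra h
      push_neg at h
      apply hne
      have e1 : i₁ = i₂ := by omega
      have e2 : j₁ = j₂ := by omega
      rw [e1, e2]
    rcases hne' with h | h
    · have : 1 ≤ X ∨ X ≤ -1 := by omega
      rcases this with h' | h' <;> nlinarith [sq_nonneg Y]
    · have : 1 ≤ Y ∨ Y ≤ -1 := by omega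
      rcases this with h' | h' <;> nlinarith [sq_nonneg X]
  have hqpos : (0 : ℤ) < q := by exact_mod_cast hq.pos
  have hk1 : 1 ≤ k := by
    by_contra h
    push_neg at h
    have h3 : (q : ℤ) * k ≤ 0 := mul_nonpos_of_nonneg_of_nonpos hqpos.le (by omega)
    linarith
  have hk2 : k ≤ 2 := by
    by_contra h
    push_neg at h
    have h3 : (q : ℤ) * 3 ≤ (q : ℤ) * k := by
      apply mul_le_mul_of_nonneg_left (by omega) hqpos.le
    linarith
  clear hkdef
  interval_cases k
  · exact ⟨X, Y, by linarith⟩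
  · have hXeven : Even (X ^ 2) := ⟨(q : ℤ) - Y ^ 2, by linarith⟩
    have hXe : Even X := (Int.even_pow.mp hXeven).1
    obtain ⟨w, hw⟩ := hXe
    refine ⟨Y, w, ?_⟩
    rw [hw] at hdvd
    linarith [hdvd, sq_nonneg (w + w), (by ring : (w + w) ^ 2 = 4 * w ^ 2)]

/-- Division step: if prime q = x²+2y² divides N = v²+2u², then N/q is representable. -/
private lemma div_step (q : ℕ) (hq : q.Prime) (x y v u N : ℤ)
    (hqx : (q : ℤ) = x ^ 2 + 2 * y ^ 2) (hN : N = v ^ 2 + 2 * u ^ 2)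
    (hdvd : (q : ℤ) ∣ N) : ∃ a b : ℤ, N = (q : ℤ) * (a ^ 2 + 2 * b ^ 2) := by
  have hqZ : Prime (q : ℤ) := Nat.prime_iff_prime_int.mp hq
  have hq0 : (q : ℤ) ≠ 0 := by
    have := hq.pos
    exact_mod_cast this.ne'
  obtain ⟨M, hM⟩ := hdvd
  have key : (q : ℤ) ∣ (v * y - u * x) * (v * y + u * x) := by
    refine ⟨y ^ 2 * M - u ^ 2, ?_⟩
    linear_combination (-y ^ 2) * hN + u ^ 2 * hqx + y ^ 2 * hM
  rcases hqZ.dvd_mul.mp key with h | h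
  · obtain ⟨b, hb⟩ := h
    have hI : N * (q : ℤ) = (v * x + 2 * u * y) ^ 2 + 2 * (v * y - u * x) ^ 2 := by
      rw [hN, hqx]; ring
    have hdvda : (q : ℤ) ∣ v * x + 2 * u * y := by
      apply hqZ.dvd_of_dvd_pow (n := 2)
      refine ⟨N - 2 * (q : ℤ) * b ^ 2, ?_⟩
      linear_combination (-1 : ℤ) * hI + (-2) * (v * y - u * x + (q : ℤ) * b) * hb
    obtain ⟨a, ha⟩ := hdvda
    refine ⟨a, b, mul_left_cancel₀ hq0 ?_⟩
    linear_combination hI + (v * x + 2 * u * y + (q : ℤ) * a) * ha +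
      2 * (v * y - u * x + (q : ℤ) * b) * hb
  · obtain ⟨b, hb⟩ := h
    have hI : N * (q : ℤ) = (v * x - 2 * u * y) ^ 2 + 2 * (v * y + u * x) ^ 2 := by
      rw [hN, hqx]; ring
    have hdvda : (q : ℤ) ∣ v * x - 2 * u * y := by
      apply hqZ.dvd_of_dvd_pow (n := 2)
      refine ⟨N - 2 * (q : ℤ) * b ^ 2, ?_⟩
      linear_combination (-1 : ℤ) * hI + (-2) * (v * y + u * x + (q : ℤ) * b) * hb
    obtain ⟨a, ha⟩ := hdvda
    refine ⟨a, b, mul_left_cancel₀ hq0 ?_⟩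
    linear_combination hI + (v * x - 2 * u * y + (q : ℤ) * a) * ha +
      2 * (v * y + u * x + (q : ℤ) * b) * hb

private lemma sq4 (n : ℕ) : n ^ 2 % 4 = 0 ∨ n ^ 2 % 4 = 1 := by
  rw [Nat.pow_mod]
  have h : n % 4 = 0 ∨ n % 4 = 1 ∨ n % 4 = 2 ∨ n % 4 = 3 := by omega
  rcases h with h | h | h | h <;> rw [h] <;> decide

private lemma sqpar (n : ℕ) : n ^ 2 % 2 = n % 2 := by
  rw [Nat.pow_mod]
  rcases Nat.mod_two_eq_zero_or_one n with h | h <;> rw [h] <;> decide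

/-- From a representation with the right shape, extract the trigonal decomposition. -/
private lemma nat_extract (c v u : ℕ) (E : v ^ 2 + 2 * u ^ 2 = 4 * c + 3) :
    ∃ x y : ℕ, u = 2 * x + 1 ∧ v = 2 * y + 1 ∧ c = 2 * (x * (x + 1)) + y * (y + 1) := by
  have h4v := sq4 v
  have h4u := sq4 u
  have hpv := sqpar v
  have hpu := sqpar u
  obtain ⟨P, hP⟩ : ∃ P, v ^ 2 = P := ⟨_, rfl⟩
  obtain ⟨Q, hQ⟩ : ∃ Q, u ^ 2 = Q := ⟨_, rfl⟩
  rw [hP] at h4v hpv E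
  rw [hQ] at h4u hpu E
  have hv1 : v % 2 = 1 := by omega
  have hu1 : u % 2 = 1 := by omega
  obtain ⟨xx, hxx⟩ : ∃ xx, u = 2 * xx + 1 := ⟨u / 2, by omega⟩
  obtain ⟨yy, hyy⟩ : ∃ yy, v = 2 * yy + 1 := ⟨v / 2, by omega⟩
  refine ⟨xx, yy, hxx, hyy, ?_⟩
  rw [← hP, ← hQ, hxx, hyy] at E
  have e1 : (2 * yy + 1) ^ 2 = 4 * (yy * (yy + 1)) + 1 := by ring
  have e2 : (2 * xx + 1) ^ 2 = 4 * (xx * (xx + 1)) + 1 := by ring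
  rw [e1, e2] at E
  obtain ⟨A, hA⟩ : ∃ A, xx * (xx + 1) = A := ⟨_, rfl⟩
  obtain ⟨B, hB⟩ : ∃ B, yy * (yy + 1) = B := ⟨_, rfl⟩
  rw [hA, hB] at E ⊢
  omega

theorem trigonal_two_a_plus_b (c : ℕ) (hc : IsTrigonal c) (h6 : 6 ≤ c) :
    (∃ a b : ℕ, IsTrigonal a ∧ IsTrigonal b ∧ a < c ∧ b < c ∧ c = 2 * a + b)
      ↔ ¬ Nat.Prime (4 * c + 3) := by
  obtain ⟨n, rfl⟩ := hc
  constructor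
  · rintro ⟨a, b, ⟨x, rfl⟩, ⟨y, rfl⟩, hac, hbc, habc⟩ hp
    have hpZ : Prime ((4 * (n * (n + 1)) + 3 : ℕ) : ℤ) := Nat.prime_iff_prime_int.mp hp
    obtain ⟨p, hpdef⟩ : ∃ p : ℤ, p = ((4 * (n * (n + 1)) + 3 : ℕ) : ℤ) := ⟨_, rfl⟩
    rw [← hpdef] at hpZ
    have hppos : (2 : ℤ) ≤ p := by
      rw [hpdef]; push_cast
      nlinarith [Int.natCast_nonneg n]
    have hpt : p = (2 * (n : ℤ) + 1) ^ 2 + 2 := by rw [hpdef]; push_cast; ring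
    have hpv : p = (2 * (y : ℤ) + 1) ^ 2 + 2 * (2 * (x : ℤ) + 1) ^ 2 := by
      rw [hpdef]
      have habcZ : ((n : ℤ) * (n + 1)) = 2 * ((x : ℤ) * (x + 1)) + (y : ℤ) * (y + 1) := by
        exact_mod_cast congrArg (Nat.cast : ℕ → ℤ) habc
      push_cast
      linear_combination 4 * habcZ
    obtain ⟨T, hT⟩ : ∃ T : ℤ, T = 2 * (n : ℤ) + 1 := ⟨_, rfl⟩
    obtain ⟨U, hU⟩ : ∃ U : ℤ, U = 2 * (x : ℤ) + 1 := ⟨_, rfl⟩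
    obtain ⟨V, hV⟩ : ∃ V : ℤ, V = 2 * (y : ℤ) + 1 := ⟨_, rfl⟩
    rw [← hT] at hpt
    rw [← hU, ← hV] at hpv
    have hT1 : 1 ≤ T := by rw [hT]; omega
    have hU1 : 1 ≤ U := by rw [hU]; omega
    have hV1 : 1 ≤ V := by rw [hV]; omega
    have key : (V - T * U) * (V + T * U) = p * (1 - U ^ 2) := by
      linear_combination (-1 : ℤ) * hpv + U ^ 2 * hpt
    rcases hpZ.dvd_mul.mp ⟨1 - U ^ 2, key⟩ with h | h
    · -- p ∣ V - T*U : forces V = T*U and U = 1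
      obtain ⟨k, hk⟩ := h
      have hI : p ^ 2 = (V * T + 2 * U) ^ 2 + 2 * (p * k) ^ 2 := by
        rw [← hk]
        calc p ^ 2 = (V ^ 2 + 2 * U ^ 2) * (T ^ 2 + 2) := by rw [← hpv, ← hpt]; ring
          _ = (V * T + 2 * U) ^ 2 + 2 * (V - T * U) ^ 2 := by ring
      have hk0 : k = 0 := by
        by_contra hk0
        have h1 : 1 ≤ k ^ 2 := by
          have : 1 ≤ k ∨ k ≤ -1 := by omega
          rcases this with h' | h' <;> nlinarith
        have h2 : p ^ 2 ≤ p ^ 2 * k ^ 2 := le_mul_of_one_le_right (sq_nonneg p) h1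
        nlinarith [sq_nonneg (V * T + 2 * U)]
      rw [hk0, mul_zero] at hk
      have hVTU : V = T * U := by linarith
      have hU2 : p * (U ^ 2 - 1) = 0 := by
        linear_combination (-1 : ℤ) * hpv + U ^ 2 * hpt + (-(V + T * U)) * hVTU
      have hUone : U ^ 2 = 1 := by
        rcases mul_eq_zero.mp hU2 with h' | h'
        · exfalso; linarith
        · linarith
      have hUeq : U = 1 := by
        have h1 : U ≤ 1 := by nlinarith
        exact le_antisymm h1 hU1
      have hx0 : x = 0 := by
        rw [hU] at hUeq; omega
      rw [hx0] at habc
      norm_num at habc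
      linarith [hbc, habc]
    · -- p ∣ V + T*U : impossible by size
      obtain ⟨k, hk⟩ := h
      have hI : p ^ 2 = (V * T - 2 * U) ^ 2 + 2 * (p * k) ^ 2 := by
        rw [← hk]
        calc p ^ 2 = (V ^ 2 + 2 * U ^ 2) * (T ^ 2 + 2) := by rw [← hpv, ← hpt]; ring
          _ = (V * T - 2 * U) ^ 2 + 2 * (V + T * U) ^ 2 := by ring
      have hTU1 : 1 ≤ T * U := by nlinarith
      have hk1 : 1 ≤ k := by
        by_contra h'
        push_neg at h'
        have h3 : p * k ≤ 0 := mul_nonpos_of_nonneg_of_nonpos (by linarith) (by omega)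
        linarith
      have h1 : 1 ≤ k ^ 2 := by nlinarith
      have h2 : p ^ 2 ≤ p ^ 2 * k ^ 2 := le_mul_of_one_le_right (sq_nonneg p) h1
      nlinarith [sq_nonneg (V * T - 2 * U)]
  · intro hnp
    obtain ⟨C, hC⟩ : ∃ C, C = n * (n + 1) := ⟨_, rfl⟩
    rw [← hC] at hnp h6 ⊢
    obtain ⟨N, hNdef⟩ : ∃ N, N = 4 * C + 3 := ⟨_, rfl⟩
    rw [← hNdef] at hnp
    have hN1 : N ≠ 1 := by omega
    have hNodd : Odd N := by rw [hNdef]; exact ⟨2 * C + 1, by ring⟩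
    obtain ⟨m, hm⟩ := Nat.minFac_dvd N
    obtain ⟨q, hqdef⟩ : ∃ q, q = N.minFac := ⟨_, rfl⟩
    rw [← hqdef] at hm
    have hqp : q.Prime := by rw [hqdef]; exact Nat.minFac_prime hN1
    have hm1 : m ≠ 1 := by
      intro h
      rw [h, mul_one] at hm
      rw [hm] at hnp
      exact hnp hqp
    have hoddmul := Nat.odd_mul.mp (hm ▸ hNodd)
    have hq2 : q % 2 = 1 := Nat.odd_iff.mp hoddmul.1
    have hm2 : m % 2 = 1 := Nat.odd_iff.mp hoddmul.2
    have ht : (q : ℤ) ∣ (2 * (n : ℤ) + 1) ^ 2 + 2 := by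
      have h1 : (q : ℤ) ∣ (N : ℤ) := Int.natCast_dvd_natCast.mpr ⟨m, hm⟩
      have h2 : (N : ℤ) = (2 * (n : ℤ) + 1) ^ 2 + 2 := by rw [hNdef, hC]; push_cast; ring
      rwa [h2] at h1
    obtain ⟨xq, yq, hqxy⟩ := thue q hqp _ ht
    have hNZ : (N : ℤ) = (2 * (n : ℤ) + 1) ^ 2 + 2 * 1 ^ 2 := by
      rw [hNdef, hC]; push_cast; ring
    obtain ⟨A, B, hAB⟩ := div_step q hqp xq yq _ 1 _ hqxy hNZ
      (Int.natCast_dvd_natCast.mpr ⟨m, hm⟩)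
    have hq0Z : (q : ℤ) ≠ 0 := by
      have := hqp.pos; exact_mod_cast this.ne'
    have hNqm : (N : ℤ) = (q : ℤ) * (m : ℤ) := by exact_mod_cast congrArg (Nat.cast : ℕ → ℤ) hm
    rw [hNqm] at hAB
    have hmAB : (m : ℤ) = A ^ 2 + 2 * B ^ 2 := mul_left_cancel₀ hq0Z hAB
    have R₁ : (N : ℤ) = (xq * A - 2 * yq * B) ^ 2 + 2 * (xq * B + yq * A) ^ 2 := by
      rw [hNqm, hqxy, hmAB]; ring
    have R₂ : (N : ℤ) = (xq * A + 2 * yq * B) ^ 2 + 2 * (xq * B - yq * A) ^ 2 := by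
      rw [hNqm, hqxy, hmAB]; ring
    have hNeq : (N : ℤ) = 4 * ((n : ℤ) * (n + 1)) + 3 := by rw [hNdef, hC]; push_cast; ring
    obtain ⟨K, hK⟩ : ∃ K : ℤ, K = (n : ℤ) * (n + 1) := ⟨_, rfl⟩
    rw [← hK] at hNeq
    have usq : ∀ VV UU : ℤ, (N : ℤ) = VV ^ 2 + 2 * UU ^ 2 → UU ^ 2 < 4 → UU ^ 2 = 1 := by
      intro VV UU hrep hlt
      have hb1 : UU ≤ 1 := by nlinarith only [hlt, sq_nonneg (UU - 2)]
      have hb2 : -1 ≤ UU := by nlinarith only [hlt, sq_nonneg (UU + 2)]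
      interval_cases UU
      · norm_num
      · exfalso
        have h1 : VV ^ 2 = 4 * K + 3 := by
          rw [hNeq] at hrep; linear_combination -hrep
        rcases Int.even_or_odd VV with ⟨s, hs⟩ | ⟨s, hs⟩
        · rw [hs] at h1
          have h2 : 4 * (s * s) = 4 * K + 3 := by linear_combination h1
          obtain ⟨S, hS⟩ : ∃ S : ℤ, S = s * s := ⟨_, rfl⟩
          rw [← hS] at h2
          omega
        · rw [hs] at h1
          have h2 : 4 * (s * s + s) + 1 = 4 * K + 3 := by linear_combination h1
          obtain ⟨S, hS⟩ : ∃ S : ℤ, S = s * s + s := ⟨_, rfl⟩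
          rw [← hS] at h2
          omega
      · norm_num
    have hgood : ∃ VV UU : ℤ, (N : ℤ) = VV ^ 2 + 2 * UU ^ 2 ∧ 4 ≤ UU ^ 2 := by
      by_cases h1 : (xq * B + yq * A) ^ 2 < 4
      · by_cases h2 : (xq * B - yq * A) ^ 2 < 4
        · exfalso
          have e1 : (xq * B + yq * A) ^ 2 = 1 := usq _ _ R₁ h1
          have e2 : (xq * B - yq * A) ^ 2 = 1 := usq _ _ R₂ h2
          have hsum2 : 2 * (xq ^ 2 * B ^ 2 + yq ^ 2 * A ^ 2) = 2 := by
            linear_combination e1 + e2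
          have hprod4 : 4 * ((xq * B) * (yq * A)) = 0 := by linear_combination e1 - e2
          have hprod : (xq * B) * (yq * A) = 0 := by linarith only [hprod4]
          rcases mul_eq_zero.mp hprod with h | h
          · have hxB2 : xq ^ 2 * B ^ 2 = 0 := by linear_combination (xq * B) * h
            have hyA2 : yq ^ 2 * A ^ 2 = 1 := by linarith only [hsum2, hxB2]
            rcases mul_eq_zero.mp h with hx | hB
            · have hy2 : yq ^ 2 = 1 := by
                rcases Int.isUnit_iff.mp (IsUnit.of_mul_eq_one _ hyA2) with h' | h'
                · exact h'
                · exfalso; linarith only [h', sq_nonneg yq]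
              have hq2' : (q : ℤ) = 2 := by rw [hqxy, hx, hy2]; norm_num
              have : q = 2 := by exact_mod_cast hq2'
              omega
            · have hA2 : A ^ 2 = 1 := by
                have hcomm : A ^ 2 * yq ^ 2 = 1 := by linarith only [hyA2]
                rcases Int.isUnit_iff.mp (IsUnit.of_mul_eq_one _ hcomm) with h' | h'
                · exact h'
                · exfalso; linarith only [h', sq_nonneg A]
              have hmm : (m : ℤ) = 1 := by rw [hmAB, hB, hA2]; norm_num
              exact hm1 (by exact_mod_cast hmm)
          · have hyA2 : yq ^ 2 * A ^ 2 = 0 := by linear_combination (yq * A) * h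
            have hxB2 : xq ^ 2 * B ^ 2 = 1 := by linarith only [hsum2, hyA2]
            rcases mul_eq_zero.mp h with hy | hA
            · have hx2 : xq ^ 2 = 1 := by
                rcases Int.isUnit_iff.mp (IsUnit.of_mul_eq_one _ hxB2) with h' | h'
                · exact h'
                · exfalso; linarith only [h', sq_nonneg xq]
              have hq1' : (q : ℤ) = 1 := by rw [hqxy, hy, hx2]; norm_num
              have : q = 1 := by exact_mod_cast hq1'
              have := hqp.one_lt
              omega
            · have hB2 : B ^ 2 = 1 := by
                have hcomm : B ^ 2 * xq ^ 2 = 1 := by linarith only [hxB2]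
                rcases Int.isUnit_iff.mp (IsUnit.of_mul_eq_one _ hcomm) with h' | h'
                · exact h'
                · exfalso; linarith only [h', sq_nonneg B]
              have hmm : (m : ℤ) = 2 := by rw [hmAB, hA, hB2]; norm_num
              have : m = 2 := by exact_mod_cast hmm
              omega
        · push_neg at h2
          exact ⟨_, _, R₂, h2⟩
      · push_neg at h1
        exact ⟨_, _, R₁, h1⟩
    obtain ⟨VV, UU, hrep, hU4⟩ := hgood
    have hcastv : ((VV.natAbs : ℤ)) ^ 2 = VV ^ 2 := Int.natAbs_sq VV
    have hcastu : ((UU.natAbs : ℤ)) ^ 2 = UU ^ 2 := Int.natAbs_sq UU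
    have EZ : ((VV.natAbs : ℤ)) ^ 2 + 2 * ((UU.natAbs : ℤ)) ^ 2 = 4 * (C : ℤ) + 3 := by
      rw [hcastv, hcastu, ← hrep, hNdef]; push_cast; ring
    have E : VV.natAbs ^ 2 + 2 * UU.natAbs ^ 2 = 4 * C + 3 := by exact_mod_cast EZ
    obtain ⟨xx, yy, hxx, hyy, hceq⟩ := nat_extract _ _ _ E
    have hx1 : 1 ≤ xx := by
      have hu4 : 4 ≤ UU.natAbs ^ 2 := by
        have h' : (4 : ℤ) ≤ ((UU.natAbs : ℤ)) ^ 2 := by rw [hcastu]; exact hU4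
        exact_mod_cast h'
      by_contra hcon
      have hxx0 : xx = 0 := by omega
      rw [hxx0] at hxx
      rw [hxx] at hu4
      norm_num at hu4
    have h2x : 2 ≤ xx * (xx + 1) := by
      simpa using Nat.mul_le_mul hx1 (show 2 ≤ xx + 1 by omega)
    refine ⟨xx * (xx + 1), yy * (yy + 1), ⟨xx, rfl⟩, ⟨yy, rfl⟩, ?_, ?_, hceq⟩
    · rw [hC] at hceq ⊢
      linarith only [hceq, h2x, Nat.zero_le (yy * (yy + 1))]
    · rw [hC] at hceq ⊢
      linarith only [hceq, h2x, Nat.zero_le (yy * (yy + 1))]
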